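/- Let $(a_n), (b_n)$ be real sequences with $a_n > 0$ and $b_n < 0$, let $k \geq 1$, set $\alpha_n = \prod_{j=n_0}^{n-1} a_j^{-1}$ and $Q^*_n = -\alpha_{n+1} b_n / \alpha_{n-k} > 0$. If $\liminf_{n\to\infty} Q^*_n > \frac{k^k}{(k+1)^{k+1}}$, then every solution of $z_{n+1} = a_n z_n + b_n z_{n-k}$ is oscillatory. -/

import Mathlib

open Filter

/-- Bernoulli-type inequality: for `ℓ ≥ 1`, `ℓ - 1 ≤ (k^k/(k+1)^(k+1)) * ℓ^(k+1)`. -/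
lemma bern_aux (k : ℕ) (hk : 1 ≤ k) (l : ℝ) (hl : 1 ≤ l) :
    l - 1 ≤ ((k : ℝ) ^ k / ((k : ℝ) + 1) ^ (k + 1)) * l ^ (k + 1) := by
  have hkpos : (0 : ℝ) < (k : ℝ) := by exact_mod_cast hk
  have hk1 : (0 : ℝ) < (k : ℝ) + 1 := by positivity
  set x : ℝ := (k : ℝ) * l / ((k : ℝ) + 1) with hx
  have hx0 : (0 : ℝ) ≤ x := by positivity
  have hB := one_add_mul_sub_le_pow (by linarith : (-1 : ℝ) ≤ x) (k + 1)
  have hxpow : x ^ (k + 1) = (k : ℝ) ^ (k + 1) * l ^ (k + 1) / ((k : ℝ) + 1) ^ (k + 1) := by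
    rw [hx, div_pow, mul_pow]
  have hlhs : 1 + ((k : ℝ) + 1) * (x - 1) = (k : ℝ) * (l - 1) := by
    have hx' : x * ((k:ℝ)+1) = k * l := by rw [hx]; exact div_mul_cancel₀ _ hk1.ne'
    field_simp [hx]; linear_combination hx'
  have hB' : (k : ℝ) * (l - 1) ≤ (k : ℝ) ^ (k + 1) * l ^ (k + 1) / ((k : ℝ) + 1) ^ (k + 1) := by
    rw [← hlhs, ← hxpow]
    calc 1 + ((k:ℝ)+1) * (x - 1) = 1 + ((k+1 : ℕ) : ℝ) * (x - 1) := by push_cast; ring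
    _ ≤ x ^ (k+1) := hB
  have key : (k : ℝ) * (l - 1) ≤ (k : ℝ) * (((k : ℝ) ^ k / ((k : ℝ) + 1) ^ (k + 1)) * l ^ (k + 1)) := by
    calc (k : ℝ) * (l - 1) ≤ (k : ℝ) ^ (k + 1) * l ^ (k + 1) / ((k : ℝ) + 1) ^ (k + 1) := hB'
    _ = (k : ℝ) * (((k : ℝ) ^ k / ((k : ℝ) + 1) ^ (k + 1)) * l ^ (k + 1)) := by
        rw [pow_succ]; ring
  exact le_of_mul_le_mul_left key hkpos

/-- ratio product bound -/
lemma ratio_pow_aux {y : ℤ → ℝ} {L : ℝ} (hL : 0 ≤ L) {n : ℤ}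
    (hpos : ∀ m, n ≤ m → 0 < y m)
    (hrat : ∀ m, n ≤ m → L ≤ y m / y (m + 1)) :
    ∀ i : ℕ, L ^ i ≤ y n / y (n + i) := by
  intro i
  induction i with
  | zero => simp [div_self (hpos n le_rfl).ne']
  | succ i ih =>
    have h1 : (n : ℤ) ≤ n + i := by omega
    have h2 : (n : ℤ) ≤ n + i + 1 := by omega
    have e : y n / y (n + (i + 1 : ℕ)) = (y n / y (n + i)) * (y (n + i) / y (n + i + 1)) := by
      push_cast
      rw [div_mul_div_comm, mul_comm (y n), mul_div_mul_left _ _ (hpos _ h1).ne']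
      ring_nf
    rw [e, pow_succ]
    have hr := hrat (n + i) h1
    exact mul_le_mul ih hr hL (le_of_lt (div_pos (hpos n le_rfl) (hpos _ h1)))

/-- Erbe–Zhang-type criterion for `z_{n+1} = aₙ zₙ + bₙ z_{n-k}` with `aₙ > 0`, `bₙ < 0`. -/
theorem stmt_11 (n0 : ℤ) (k : ℕ) (hk : 1 ≤ k) (a b : ℤ → ℝ)
    (ha : ∀ n, 0 < a n) (hb : ∀ n, b n < 0)
    (α Qs : ℤ → ℝ)
    (hα : ∀ n, α n = ∏ j ∈ Finset.Ico n0 n, (a j)⁻¹)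
    (hQs : ∀ n, Qs n = -(α (n + 1) * b n / α (n - k)))
    (hQpos : ∀ n, 0 < Qs n)
    (hlim : (k : ℝ) ^ k / ((k : ℝ) + 1) ^ (k + 1) < Filter.liminf Qs Filter.atTop)
    (z : ℤ → ℝ)
    (heq : ∀ n : ℤ, z (n + 1) = a n * z n + b n * z (n - k))
    (hne : ∃ n, z n ≠ 0) :
    ∀ M : ℤ, ∃ n, M ≤ n ∧ z n * z (n + 1) ≤ 0 := by
  by_contra hcon
  push_neg at hcon
  obtain ⟨M, hM⟩ := hcon
  -- positivity of α
  have hαpos : ∀ n, 0 < α n := by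
    intro n; rw [hα]
    exact Finset.prod_pos fun j _ => inv_pos.mpr (ha j)
  -- constant sign of z beyond M
  set s : ℝ := if 0 < z M then 1 else -1 with hs
  have hsz : ∀ n, M ≤ n → 0 < s * z n := by
    refine Int.le_induction ?_ ?_
    · rcases lt_trichotomy (z M) 0 with h | h | h
      · rw [hs, if_neg (by linarith)]; nlinarith
      · exfalso; have h2 := hM M le_rfl; rw [h] at h2; simp at h2
      · rw [hs, if_pos h]; linarith
    · intro n hn ih
      have h1 := hM n hn
      nlinarith [sq_nonneg (z n)]
  -- the transformed sequence
  set y : ℤ → ℝ := fun n => s * (α n * z n) with hy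
  have hypos : ∀ n, M ≤ n → 0 < y n := by
    intro n hn
    have h : y n = α n * (s * z n) := by rw [hy]; ring
    rw [h]; exact mul_pos (hαpos n) (hsz n hn)
  -- recurrence for α
  have hαrec : ∀ n, n0 ≤ n → α (n + 1) * a n = α n := by
    intro n hn
    have h : Finset.Ico n0 (n+1) = insert n (Finset.Ico n0 n) := by
      ext x; simp only [Finset.mem_Ico, Finset.mem_insert]; omega
    rw [hα, hα, h, Finset.prod_insert (by simp)]
    have hne' : a n ≠ 0 := (ha n).ne'
    have hpne : (∏ x ∈ Finset.Ico n0 n, a x) ≠ 0 :=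
      Finset.prod_ne_zero_iff.mpr fun j _ => (ha j).ne'
    field_simp
  -- recurrence for y
  have hkey : ∀ n, n0 ≤ n → y (n + 1) = y n - Qs n * y (n - k) := by
    intro n hn
    have h1 := hαrec n hn
    have h2 : α (n - k) ≠ 0 := (hαpos _).ne'
    have e1 : Qs n * y (n - k) = -(s * (α (n + 1) * (b n * z (n - k)))) := by
      rw [hQs n, hy]; simp only
      field_simp
    rw [hy]; simp only
    rw [heq n, e1, ← h1]
    ring
  -- the constant and threshold
  set c : ℝ := (k : ℝ) ^ k / ((k : ℝ) + 1) ^ (k + 1) with hcdef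
  have hc0 : 0 < c := by positivity
  set r : ℝ := (c + Filter.liminf Qs Filter.atTop) / 2 with hr
  have hrc : c < r := by rw [hr]; linarith
  have hr0 : 0 < r := lt_trans hc0 hrc
  have hrlim : r < Filter.liminf Qs Filter.atTop := by rw [hr]; linarith
  have hQbdd : Filter.atTop.IsBoundedUnder (· ≥ ·) Qs :=
    Filter.isBoundedUnder_of ⟨0, fun x => (hQpos x).le⟩
  have hQr := Filter.eventually_lt_of_lt_liminf hrlim hQbdd
  obtain ⟨Nr, hNr⟩ := Filter.eventually_atTop.mp hQr
  -- starting point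
  set N1 : ℤ := max (max n0 M) Nr + (k + 1) with hN1
  have hN1n0 : ∀ n, N1 ≤ n → n0 ≤ n := by intro n hn; omega
  have hN1M : ∀ n, N1 ≤ n → M ≤ n - k := by intro n hn; omega
  have hN1Nr : ∀ n, N1 ≤ n → Nr ≤ n := by intro n hn; omega
  have hN1M' : ∀ n, N1 ≤ n → M ≤ n := by intro n hn; omega
  -- decrease
  have hdec : ∀ n, N1 ≤ n → y (n + 1) < y n := by
    intro n hn
    have h := hkey n (hN1n0 n hn)
    nlinarith [hQpos n, hypos (n - k) (hN1M n hn)]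
  have hmono : ∀ n, N1 ≤ n → ∀ m, n ≤ m → y m ≤ y n := by
    intro n hn
    refine Int.le_induction le_rfl ?_
    intro m hm ih
    exact le_trans (hdec m (le_trans hn hm)).le ih
  -- ratios
  set lam : ℤ → ℝ := fun n => y n / y (n + 1) with hlamdef
  have hlam1 : ∀ n, N1 ≤ n → 1 < lam n := by
    intro n hn
    rw [hlamdef]
    exact (one_lt_div (hypos (n + 1) (by have := hN1M' n hn; omega))).mpr (hdec n hn)
  -- key identity
  have hidn : ∀ n, N1 ≤ n → Qs n * (y (n - k) / y n) = 1 - 1 / lam n := by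
    intro n hn
    have h1 := hkey n (hN1n0 n hn)
    have h2 : y n ≠ 0 := (hypos n (hN1M' n hn)).ne'
    have h3 : y (n + 1) ≠ 0 := (hypos (n + 1) (by have := hN1M' n hn; omega)).ne'
    rw [hlamdef]; simp only [one_div_div]
    field_simp
    linarith [h1]
  -- upper bound for ratios
  set N2 : ℤ := N1 + k with hN2
  have hlamub : ∀ j, N2 ≤ j → lam j ≤ 1 / r := by
    intro j hj
    have hj1 : N1 ≤ j + 1 := by omega
    have hup := hidn (j + 1) hj1
    have hNk : N1 ≤ j + 1 - k := by omega
    have hmon := hmono (j + 1 - k) hNk j (by omega)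
    have hyj1 : 0 < y (j + 1) := hypos _ (by have := hN1M' (j+1) hj1; omega)
    have hyjk : 0 < y (j + 1 - k) := hypos _ (hN1M (j + 1) hj1)
    have hlamj1 := hlam1 (j + 1) hj1
    have hlam_le : lam j ≤ y (j + 1 - k) / y (j + 1) := by
      show y j / y (j + 1) ≤ y (j + 1 - k) / y (j + 1)
      exact (div_le_div_iff_of_pos_right hyj1).mpr hmon
    have hQ1 : Qs (j + 1) * (y (j + 1 - k) / y (j + 1)) ≤ 1 := by
      rw [hup]
      have h0 : 0 < 1 / lam (j + 1) := by positivity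
      linarith
    have hQr1 : r < Qs (j + 1) := hNr (j + 1) (by omega)
    have hrat_le : y (j + 1 - k) / y (j + 1) ≤ 1 / Qs (j + 1) := by
      rw [le_div_iff₀ (hQpos (j + 1))]
      linarith [hQ1]
    have hfin : (1 : ℝ) / Qs (j + 1) ≤ 1 / r := by
      apply one_div_le_one_div_of_le hr0 hQr1.le
    linarith
  -- boundedness of lam
  have hbdd_below : Filter.atTop.IsBoundedUnder (· ≥ ·) lam :=
    ⟨1, by
      rw [Filter.eventually_map]
      exact Filter.eventually_atTop.mpr ⟨N1, fun n hn => (hlam1 n hn).le⟩⟩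
  have hbdd_above : Filter.atTop.IsBoundedUnder (· ≤ ·) lam :=
    ⟨1 / r, by
      rw [Filter.eventually_map]
      exact Filter.eventually_atTop.mpr ⟨N2, fun n hn => hlamub n hn⟩⟩
  set l : ℝ := Filter.liminf lam Filter.atTop with hldef
  have hl1 : 1 ≤ l :=
    Filter.le_liminf_of_le hbdd_above.isCoboundedUnder_ge
      (Filter.eventually_atTop.mpr ⟨N1, fun n hn => (hlam1 n hn).le⟩)
  -- main estimate
  have hmain : ∀ ε : ℝ, 0 < ε → ε ≤ 1 → r * (l - ε) ^ k < 1 - 1 / (l + ε) := by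
    intro ε hε hε1
    have hLpos : 0 ≤ l - ε := by linarith
    have h1 := Filter.eventually_lt_of_lt_liminf (show l - ε < l by linarith) hbdd_below
    obtain ⟨N3, hN3⟩ := Filter.eventually_atTop.mp h1
    have h2 : ∃ᶠ n in Filter.atTop, lam n < l + ε :=
      Filter.frequently_lt_of_liminf_lt hbdd_above.isCoboundedUnder_ge (by linarith)
    obtain ⟨n, hn_lt, hn_ge⟩ :=
      (h2.and_eventually (Filter.eventually_ge_atTop (max (N3 + k) (N2 + k)))).exists
    have hnN1 : N1 ≤ n := by omega
    have hrp := ratio_pow_aux hLpos (n := n - k)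
      (fun m hm => hypos m (by have := hN1M' n hnN1; omega))
      (fun m hm => by
        simpa [hlamdef] using (hN3 m (by omega)).le) k
    have e : n - (k : ℤ) + (k : ℕ) = n := by push_cast; ring
    rw [e] at hrp
    have hid := hidn n hnN1
    have hQn := hNr n (by omega)
    have hlamn1 := hlam1 n hnN1
    have hrat_pos : 0 < y (n - k) / y n :=
      div_pos (hypos _ (hN1M n hnN1)) (hypos _ (hN1M' n hnN1))
    have c1 : r * (l - ε) ^ k ≤ r * (y (n - k) / y n) :=
      mul_le_mul_of_nonneg_left hrp hr0.le
    have c2 : r * (y (n - k) / y n) < Qs n * (y (n - k) / y n) :=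
      mul_lt_mul_of_pos_right hQn hrat_pos
    have c3 : (1 : ℝ) / (l + ε) < 1 / lam n :=
      one_div_lt_one_div_of_lt (by linarith) hn_lt
    calc r * (l - ε) ^ k ≤ r * (y (n - k) / y n) := c1
    _ < Qs n * (y (n - k) / y n) := c2
    _ = 1 - 1 / lam n := hid
    _ < 1 - 1 / (l + ε) := by linarith
  -- limit passage and contradiction
  have htend : Filter.Tendsto (fun m : ℕ => 1 / ((m : ℝ) + 1)) Filter.atTop (nhds 0) :=
    tendsto_one_div_add_atTop_nhds_zero_nat
  have f1 : Filter.Tendsto (fun m : ℕ => r * (l - 1 / ((m : ℝ) + 1)) ^ k) Filter.atTop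
      (nhds (r * (l - 0) ^ k)) :=
    ((tendsto_const_nhds.sub htend).pow k).const_mul r
  have f2 : Filter.Tendsto (fun m : ℕ => 1 - 1 / (l + 1 / ((m : ℝ) + 1))) Filter.atTop
      (nhds (1 - 1 / (l + 0))) :=
    tendsto_const_nhds.sub (tendsto_const_nhds.div (tendsto_const_nhds.add htend)
      (by intro h; rw [add_zero] at h; linarith))
  have hle : r * (l - 0) ^ k ≤ 1 - 1 / (l + 0) := by
    apply le_of_tendsto_of_tendsto' f1 f2
    intro m
    have hm0 : (0 : ℝ) < 1 / ((m : ℝ) + 1) := by positivity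
    have hm1 : 1 / ((m : ℝ) + 1) ≤ 1 := by
      rw [div_le_one (by positivity)]; push_cast; linarith [Nat.cast_nonneg (α := ℝ) m]
    exact (hmain _ hm0 hm1).le
  rw [sub_zero, add_zero] at hle
  have hB : l - 1 ≤ c * l ^ (k + 1) := by rw [hcdef]; exact bern_aux k hk l hl1
  have hl0 : 0 < l := by linarith
  have h6 := mul_le_mul_of_nonneg_right hle hl0.le
  have h7 : (1 - 1 / l) * l = l - 1 := by field_simp
  rw [h7] at h6
  have h8 : c * (l ^ k * l) < r * (l ^ k * l) :=
    mul_lt_mul_of_pos_right hrc (mul_pos (pow_pos hl0 k) hl0)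
  rw [pow_succ] at hB
  nlinarith [h6, hB, h8]
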